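/- Let d ∈ V, set ε = +1 if Tr(ϑ_0(d)) = 0 and ε = −1 if Tr(ϑ_0(d)) = 1, let λ ∈ F satisfy λ² + λ + 1 = 0, let V' = {x ∈ V : Tr(ϑ_d(x)) = 1}, and let A = {a ∈ V' : ϑ_d(a) = λ} and B = {a ∈ V' : ϑ_d(a) = λ + 1}. Then A and B partition V', |A| = |B| = 2^{4m−2} − ε·2^{2m−2}, and in the graph on V' with distinct a, b adjacent iff Tr(⟨a,b⟩) = 0, every vertex of A has exactly 2^{4m−3} − ε·2^{2m−2} − 1 neighbors in A (and likewise every vertex of B has exactly that many neighbors in B). (These are the switching sets of the Seidel switching between NO^±(4m,2) and NO^∓(2m+1,4): they have size v/2 and are regular of degree k − μ.) -/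

import Mathlib

open Finset

noncomputable section

/-- The symplectic bilinear form `⟨u,v⟩ = ∑_{i<m} (u_i v_{m+i} + u_{m+i} v_i)` on `F^{2m}`,
`F = GF(4)`. -/
def symp (m : ℕ) (u v : Fin (2*m) → GaloisField 2 2) : GaloisField 2 2 :=
  ∑ i : Fin m, (u ⟨i.1, by omega⟩ * v ⟨m + i.1, by omega⟩ +
    u ⟨m + i.1, by omega⟩ * v ⟨i.1, by omega⟩)

/-- The quadratic form `ϑ_0(u) = ∑_{i<m} u_i u_{m+i}`. -/
def th0 (m : ℕ) (u : Fin (2*m) → GaloisField 2 2) : GaloisField 2 2 :=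
  ∑ i : Fin m, u ⟨i.1, by omega⟩ * u ⟨m + i.1, by omega⟩

/-- The quadratic form `ϑ_a(u) = ϑ_0(u) + ⟨a,u⟩²`. -/
def th (m : ℕ) (a u : Fin (2*m) → GaloisField 2 2) : GaloisField 2 2 :=
  th0 m u + (symp m a u)^2

/-- The absolute trace of `GF(4)`, `Tr(x) = x + x²`. -/
def tr4 (x : GaloisField 2 2) : GaloisField 2 2 := x + x^2

end

namespace S15
open scoped Classical
local notation "F" => GaloisField 2 2

noncomputable instance : Fintype (GaloisField 2 2) := Fintype.ofFinite _

lemma cardF : Fintype.card (GaloisField 2 2) = 4 := by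
  simpa using GaloisField.card 2 2 (by norm_num)

lemma pow4 (x : F) : x ^ 4 = x := by
  have h := FiniteField.pow_card x
  rwa [cardF] at h

lemma twoz : (2 : F) = 0 := CharTwo.two_eq_zero

lemma cube_eq_one {c : F} (hc : c ≠ 0) : c ^ 3 = 1 := by
  have h : c ^ 3 * c = 1 * c := by rw [one_mul, ← pow_succ]; exact pow4 c
  exact mul_right_cancel₀ hc h

lemma inv_eq_sq {c : F} (hc : c ≠ 0) : c⁻¹ = c ^ 2 := by
  field_simp
  exact (cube_eq_one hc).symm

lemma tr4_add (x y : F) : tr4 (x + y) = tr4 x + tr4 y := by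
  unfold tr4; rw [CharTwo.add_sq]; ring

lemma tr4_zero : tr4 0 = 0 := by unfold tr4; ring

lemma tr4_one : tr4 1 = 0 := by unfold tr4; rw [one_pow]; exact CharTwo.add_self_eq_zero 1

lemma tr4_sq (x : F) : tr4 (x ^ 2) = tr4 x := by
  unfold tr4
  rw [show (x^2)^2 = x^4 by ring, pow4]; ring

lemma tr4_mem (x : F) : tr4 x = 0 ∨ tr4 x = 1 := by
  have h : tr4 x * (tr4 x - 1) = 0 := by
    have h4 := pow4 x
    have h2 := twoz
    unfold tr4
    linear_combination h4 + x^3 * h2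
  rcases mul_eq_zero.1 h with h | h
  · exact Or.inl h
  · exact Or.inr (sub_eq_zero.mp h)

noncomputable def chi (x : F) : ℤ := if tr4 x = 0 then 1 else -1

lemma chi_zero : chi 0 = 1 := by simp [chi, tr4_zero]

lemma chi_eq_of_tr {x y : F} (h : tr4 x = tr4 y) : chi x = chi y := by
  unfold chi; rw [h]

lemma chi_of_tr_one {x : F} (h : tr4 x = 1) : chi x = -1 := by
  simp [chi, h]

lemma chi_add (x y : F) : chi (x + y) = chi x * chi y := by
  unfold chi
  rcases tr4_mem x with hx | hx <;> rcases tr4_mem y with hy | hy <;>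
    rw [tr4_add, hx, hy] <;> simp [CharTwo.add_self_eq_zero (1:F)]

lemma chi_sum {ι : Type*} (s : Finset ι) (f : ι → F) :
    chi (∑ i ∈ s, f i) = ∏ i ∈ s, chi (f i) := by
  induction s using Finset.cons_induction with
  | empty => simp [chi_zero]
  | cons i s hi ih => rw [Finset.sum_cons, Finset.prod_cons, chi_add, ih]

lemma chi_sq_shift (c s : F) : chi (c * s ^ 2) = chi (c ^ 2 * s) := by
  apply chi_eq_of_tr
  have := tr4_sq (c * s^2)
  rw [show (c*s^2)^2 = c^2 * (s^2)^2 by ring, show (s^2)^2 = s^4 by ring, pow4] at this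
  exact this.symm

section withz
variable {z : F} (hz : tr4 z = 1)
include hz

lemma sum_chi : ∑ y : F, chi y = 0 := by
  have h := Equiv.sum_comp (Equiv.addRight z) chi
  have h2 : ∀ y : F, chi (y + z) = chi y * chi z := fun y => chi_add y z
  rw [Fintype.sum_congr _ _ (fun y => by simpa using h2 y)] at h
  rw [chi_of_tr_one hz] at h
  simp only [mul_neg_one, Finset.sum_neg_distrib] at h
  linarith [h]

lemma sum_chi_mul {α : F} (ha : α ≠ 0) : ∑ y : F, chi (α * y) = 0 := by
  have h := Equiv.sum_comp (Equiv.mulLeft₀ α ha) chi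
  simpa [sum_chi hz] using h

lemma sum_chi_mul' (α : F) : ∑ y : F, chi (α * y) = if α = 0 then 4 else 0 := by
  split_ifs with h
  · subst h; simp [chi_zero, cardF]
  · exact sum_chi_mul hz h

lemma gauss (c a b : F) (hc : c ≠ 0) :
    ∑ v : F, ∑ u : F, chi (c * u * v + a * u + b * v) = 4 * chi (c⁻¹ * (a * b)) := by
  have h1 : ∀ v : F, ∑ u : F, chi (c * u * v + a * u + b * v)
      = chi (b * v) * (if c * v + a = 0 then 4 else 0) := by
    intro v
    rw [← sum_chi_mul' hz (c * v + a), Finset.mul_sum]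
    apply Fintype.sum_congr
    intro u
    rw [show c * u * v + a * u + b * v = b*v + (c*v+a)*u by ring, chi_add]
  rw [Fintype.sum_congr _ _ h1]
  rw [Finset.sum_eq_single (c⁻¹ * a)]
  · rw [if_pos (by field_simp; rw [one_add_one_eq_two, twoz, mul_zero])]
    rw [show b * (c⁻¹ * a) = c⁻¹ * (a*b) by ring]; ring
  · intro v _ hv
    rw [if_neg, mul_zero]
    intro hcv
    apply hv
    field_simp
    have : c * v = a := by linear_combination hcv - a * twoz
    rw [← this]; ring
  · intro h; exact absurd (Finset.mem_univ _) h
end withz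

def pe (m : ℕ) : (Fin m → F × F) ≃ (Fin (2*m) → F) where
  toFun g j := if h : j.1 < m then (g ⟨j.1, h⟩).1 else (g ⟨j.1 - m, by omega⟩).2
  invFun x i := (x ⟨i.1, by omega⟩, x ⟨m + i.1, by omega⟩)
  left_inv g := by
    funext i
    have h1 : (i:ℕ) < m := i.2
    have h2 : ¬ (m + (i:ℕ) < m) := by omega
    ext
    · simp only [dif_pos h1]
    · simp only [dif_neg h2]
      have he : (⟨m + (i:ℕ) - m, by omega⟩ : Fin m) = i := Fin.ext (by simp)
      rw [he]
  right_inv x := by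
    funext j
    by_cases h : (j:ℕ) < m
    · simp only [dif_pos h]
    · simp only [dif_neg h]
      have he : (⟨m + ((j:ℕ) - m), by omega⟩ : Fin (2*m)) = j := Fin.ext (by simp; omega)
      rw [he]

lemma pe_lo {m : ℕ} (g : Fin m → F × F) (i : Fin m) (h : (i:ℕ) < 2*m) :
    pe m g ⟨i.1, h⟩ = (g i).1 := by
  simp only [pe, Equiv.coe_fn_mk, dif_pos i.2]

lemma pe_hi {m : ℕ} (g : Fin m → F × F) (i : Fin m) (h : m + (i:ℕ) < 2*m) :
    pe m g ⟨m + i.1, h⟩ = (g i).2 := by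
  simp only [pe, Equiv.coe_fn_mk]
  rw [dif_neg (by omega)]
  have he : (⟨m + (i:ℕ) - m, by omega⟩ : Fin m) = i := Fin.ext (by simp)
  rw [he]

section withz2
variable {z : F} (hz : tr4 z = 1)
include hz

lemma main_sum (m : ℕ) {c : F} (hc : c ≠ 0) (w : Fin (2*m) → F) :
    ∑ x : Fin (2*m) → F, chi (c * th0 m x + symp m w x)
      = 4^m * chi (c⁻¹ * th0 m w) := by
  have key : ∀ x : Fin (2*m) → F, c * th0 m x + symp m w x
      = ∑ i : Fin m, (c * x ⟨i.1, by omega⟩ * x ⟨m + i.1, by omega⟩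
          + w ⟨m + i.1, by omega⟩ * x ⟨i.1, by omega⟩
          + w ⟨i.1, by omega⟩ * x ⟨m + i.1, by omega⟩) := by
    intro x
    unfold th0 symp
    rw [Finset.mul_sum, ← Finset.sum_add_distrib]
    exact Finset.sum_congr rfl (fun i _ => by ring)
  calc ∑ x : Fin (2*m) → F, chi (c * th0 m x + symp m w x)
      = ∑ g : Fin m → F × F, chi (c * th0 m (pe m g) + symp m w (pe m g)) :=
        (Equiv.sum_comp (pe m) _).symm
    _ = ∑ g : Fin m → F × F, ∏ i : Fin m,
          chi (c * (g i).1 * (g i).2 + w ⟨m + i.1, by omega⟩ * (g i).1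
            + w ⟨i.1, by omega⟩ * (g i).2) := by
        apply Fintype.sum_congr
        intro g
        rw [key, chi_sum]
        apply Finset.prod_congr rfl
        intro i _
        rw [pe_lo, pe_hi]
    _ = ∏ i : Fin m, ∑ p : F × F,
          chi (c * p.1 * p.2 + w ⟨m + i.1, by omega⟩ * p.1
            + w ⟨i.1, by omega⟩ * p.2) := by
        rw [Finset.prod_univ_sum]
        rw [Fintype.piFinset_univ]
    _ = ∏ i : Fin m, (4 * chi (c⁻¹ * (w ⟨m + i.1, by omega⟩ * w ⟨i.1, by omega⟩))) := by
        apply Finset.prod_congr rfl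
        intro i _
        rw [Fintype.sum_prod_type_right]
        exact gauss hz c _ _ hc
    _ = 4^m * chi (c⁻¹ * th0 m w) := by
        rw [Finset.prod_mul_distrib, Finset.prod_const, Finset.card_univ, Fintype.card_fin]
        congr 1
        rw [← chi_sum]
        apply chi_eq_of_tr
        congr 1
        unfold th0
        rw [Finset.mul_sum]
        exact Finset.sum_congr rfl (fun i _ => by ring)

end withz2

lemma addeq {u v : F} : u + v = 0 ↔ u = v := by
  constructor
  · intro h; linear_combination h - v * twoz
  · intro h; rw [h]; exact CharTwo.add_self_eq_zero v

lemma tr4_shift (c s : F) : tr4 (c * s ^ 2) = tr4 (c ^ 2 * s) := by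
  have := tr4_sq (c * s^2)
  rw [show (c*s^2)^2 = c^2 * s^4 by ring, pow4] at this
  exact this.symm

lemma symp_add_left (m : ℕ) (u v x : Fin (2*m) → F) :
    symp m (fun j => u j + v j) x = symp m u x + symp m v x := by
  unfold symp
  rw [← Finset.sum_add_distrib]
  exact Finset.sum_congr rfl (fun i _ => by ring)

lemma symp_smul_left (m : ℕ) (c : F) (u x : Fin (2*m) → F) :
    symp m (fun j => c * u j) x = c * symp m u x := by
  unfold symp
  rw [Finset.mul_sum]
  exact Finset.sum_congr rfl (fun i _ => by ring)

lemma symp_add_right (m : ℕ) (u x y : Fin (2*m) → F) :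
    symp m u (x + y) = symp m u x + symp m u y := by
  unfold symp
  rw [← Finset.sum_add_distrib]
  refine Finset.sum_congr rfl (fun i _ => ?_)
  simp only [Pi.add_apply]
  ring

lemma symp_self (m : ℕ) (u : Fin (2*m) → F) : symp m u u = 0 := by
  unfold symp
  rw [Finset.sum_eq_zero]
  intro i _
  rw [mul_comm]
  exact CharTwo.add_self_eq_zero _

lemma th0_add (m : ℕ) (u v : Fin (2*m) → F) :
    th0 m (fun j => u j + v j) = th0 m u + th0 m v + symp m u v := by
  unfold th0 symp
  rw [← Finset.sum_add_distrib, ← Finset.sum_add_distrib]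
  exact Finset.sum_congr rfl (fun i _ => by ring)

lemma th0_smul (m : ℕ) (c : F) (u : Fin (2*m) → F) :
    th0 m (fun j => c * u j) = c^2 * th0 m u := by
  unfold th0
  rw [Finset.mul_sum]
  exact Finset.sum_congr rfl (fun i _ => by ring)

lemma th_zero (m : ℕ) (d : Fin (2*m) → F) : th m d 0 = 0 := by
  simp [th, th0, symp]

lemma cardV (m : ℕ) : (Fintype.card (Fin (2*m) → F) : ℤ) = 4^(2*m) := by
  rw [Fintype.card_fun, cardF, Fintype.card_fin]
  push_cast
  ring

section count
variable {z : F} (hz : tr4 z = 1)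
include hz

lemma inner_sum (m : ℕ) (d : Fin (2*m) → F) {c : F} (hc : c ≠ 0) :
    ∑ x : Fin (2*m) → F, chi (c * th m d x) = 4^m * chi (th0 m d) := by
  have h1 : ∀ x : Fin (2*m) → F, chi (c * th m d x)
      = chi (c * th0 m x + symp m (fun j => c^2 * d j) x) := by
    intro x
    rw [symp_smul_left]
    unfold th
    rw [show c * (th0 m x + (symp m d x)^2) = c * th0 m x + c * (symp m d x)^2 by ring]
    rw [chi_add, chi_sq_shift, ← chi_add]
  rw [Fintype.sum_congr _ _ h1, main_sum hz m hc]
  congr 1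
  apply chi_eq_of_tr
  congr 1
  rw [th0_smul, show ((c:F)^2)^2 = c^4 by ring, pow4, ← mul_assoc, inv_mul_cancel₀ hc, one_mul]

lemma sumA (m : ℕ) (d : Fin (2*m) → F) {mu : F} (hmu : mu ≠ 0) :
    ∑ x : Fin (2*m) → F, ∑ c : F, chi (c * (th m d x + mu))
      = 4^(2*m) - 4^m * chi (th0 m d) := by
  rw [Finset.sum_comm]
  rw [Finset.sum_eq_sum_sdiff_singleton_add (Finset.mem_univ (0:F))]
  have h0 : ∑ x : Fin (2*m) → F, chi ((0:F) * (th m d x + mu)) = 4^(2*m) := by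
    have : ∀ x : Fin (2*m) → F, chi ((0:F) * (th m d x + mu)) = 1 := by
      intro x; rw [zero_mul, chi_zero]
    rw [Fintype.sum_congr _ _ this, Finset.sum_const, Finset.card_univ, nsmul_eq_mul,
      mul_one, cardV]
  rw [h0]
  have h1 : ∀ c ∈ (univ : Finset (GaloisField 2 2)) \ {0},
      ∑ x : Fin (2*m) → F, chi (c * (th m d x + mu))
        = chi (c * mu) * (4^m * chi (th0 m d)) := by
    intro c hc
    have hc0 : c ≠ 0 := by simpa using (Finset.mem_sdiff.1 hc).2
    rw [← inner_sum hz m d hc0, Finset.mul_sum]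
    apply Fintype.sum_congr
    intro x
    rw [show c * (th m d x + mu) = c * mu + c * th m d x by ring, chi_add]
  rw [Finset.sum_congr rfl h1, ← Finset.sum_mul]
  have h2 : ∑ c ∈ (univ : Finset (GaloisField 2 2)) \ {0}, chi (c * mu) = -1 := by
    have h3 := sum_chi_mul hz hmu
    have h4 : ∑ c : F, chi (mu * c) = 0 := h3
    rw [Finset.sum_eq_sum_sdiff_singleton_add (Finset.mem_univ (0:F))] at h4
    have h5 : ∀ c, chi (c * mu) = chi (mu * c) := fun c => by rw [mul_comm]
    rw [Finset.sum_congr rfl (fun c _ => h5 c)]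
    rw [mul_zero, chi_zero] at h4
    linarith
  rw [h2]
  ring

lemma count_mu (m : ℕ) (d : Fin (2*m) → F) {mu : F} (hmu : mu ≠ 0) :
    (4:ℤ) * ((univ : Finset (Fin (2*m) → F)).filter (fun x => th m d x = mu)).card
      = 4^(2*m) - 4^m * chi (th0 m d) := by
  rw [← sumA hz m d hmu]
  rw [Finset.card_filter, Nat.cast_sum, Finset.mul_sum]
  apply Fintype.sum_congr
  intro x
  have hx : ∑ c : F, chi (c * (th m d x + mu))
      = if th m d x + mu = 0 then (4:ℤ) else 0 := by
    rw [← sum_chi_mul' hz (th m d x + mu)]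
    exact Fintype.sum_congr _ _ (fun c => by rw [mul_comm])
  rw [hx]
  split_ifs with h h2 h2
  · simp
  · exact absurd ((addeq (u := th m d x) (v := mu)).2 h) h2
  · exact absurd ((addeq (u := th m d x) (v := mu)).1 h2) h
  · simp

end count

lemma symp_hits (m : ℕ) {a : Fin (2*m) → F} (ha : a ≠ 0) (v : F) :
    ∃ x0 : Fin (2*m) → F, symp m a x0 = v := by
  obtain ⟨j, hj⟩ := Function.ne_iff.1 ha
  simp only [Pi.zero_apply] at hj
  by_cases hjm : (j:ℕ) < m
  · refine ⟨Pi.single (⟨m + j.1, by omega⟩ : Fin (2*m)) ((a j)⁻¹ * v), ?_⟩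
    unfold symp
    rw [Finset.sum_eq_single (⟨j.1, hjm⟩ : Fin m)]
    · simp only [Pi.single_apply, Fin.mk.injEq, Fin.val_mk]
      rw [if_pos trivial, if_neg (by omega), mul_zero, add_zero]
      have hai : (⟨j.1, by omega⟩ : Fin (2*m)) = j := Fin.ext rfl
      rw [hai, mul_inv_cancel_left₀ hj]
    · intro i _ hij
      have hv : i.1 ≠ j.1 := fun h => hij (Fin.ext h)
      simp only [Pi.single_apply, Fin.mk.injEq, Fin.val_mk]
      rw [if_neg (by omega), if_neg (by omega), mul_zero, mul_zero, add_zero]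
    · intro h; exact absurd (Finset.mem_univ _) h
  · refine ⟨Pi.single (⟨j.1 - m, by omega⟩ : Fin (2*m)) ((a j)⁻¹ * v), ?_⟩
    unfold symp
    rw [Finset.sum_eq_single (⟨j.1 - m, by omega⟩ : Fin m)]
    · simp only [Pi.single_apply, Fin.mk.injEq, Fin.val_mk]
      rw [if_neg (by omega), if_pos trivial, mul_zero, zero_add]
      have hai : (⟨m + (j.1 - m), by omega⟩ : Fin (2*m)) = j := Fin.ext (by simp only [Fin.val_mk]; omega)
      rw [hai, mul_inv_cancel_left₀ hj]
    · intro i _ hij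
      have hv : i.1 ≠ j.1 - m := fun h => hij (Fin.ext h)
      simp only [Pi.single_apply, Fin.mk.injEq, Fin.val_mk]
      rw [if_neg (by omega), if_neg (by omega), mul_zero, mul_zero, add_zero]
    · intro h; exact absurd (Finset.mem_univ _) h

section count2
variable {z : F} (hz : tr4 z = 1)
include hz

lemma sum_symp (m : ℕ) {a : Fin (2*m) → F} (ha : a ≠ 0) :
    ∑ x : Fin (2*m) → F, chi (symp m a x) = 0 := by
  obtain ⟨x0, hx0⟩ := symp_hits m ha z
  have h := Equiv.sum_comp (Equiv.addRight x0) (fun x => chi (symp m a x))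
  have h2 : ∀ x : Fin (2*m) → F, chi (symp m a (x + x0)) = chi (symp m a x) * -1 := by
    intro x
    rw [symp_add_right, chi_add, hx0, chi_of_tr_one hz]
  simp only [Equiv.coe_addRight] at h
  rw [Fintype.sum_congr _ _ h2] at h
  simp only [mul_neg_one, Finset.sum_neg_distrib] at h
  linarith

omit hz in
lemma chi_tr_zero {x : F} (h : tr4 x = 0) : chi x = 1 := by simp [chi, h]

lemma count_deg (m : ℕ) (d : Fin (2*m) → F) {mu : F} (hmu : mu ≠ 0) (htrmu : tr4 mu = 1)
    {a : Fin (2*m) → F} (ha : th m d a = mu) :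
    (8:ℤ) * ((univ : Finset (Fin (2*m) → F)).filter
        (fun x => th m d x = mu ∧ tr4 (symp m a x) = 0)).card
      = 4^(2*m) - 2 * (4^m * chi (th0 m d)) := by
  have ha0 : a ≠ 0 := fun h => hmu (by rw [h, th_zero] at ha; exact ha.symm)
  have hpt : ∀ x : Fin (2*m) → F,
      (8:ℤ) * (if th m d x = mu ∧ tr4 (symp m a x) = 0 then (1:ℤ) else 0)
        = (∑ c : F, chi (c * (th m d x + mu))) * (1 + chi (symp m a x)) := by
    intro x
    have hx : ∑ c : F, chi (c * (th m d x + mu))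
        = if th m d x = mu then (4:ℤ) else 0 := by
      refine (Fintype.sum_congr _ _ (fun c => by rw [mul_comm])).trans
        ((sum_chi_mul' hz (th m d x + mu)).trans ?_)
      have h2 : (th m d x + mu = 0) = (th m d x = mu) :=
        propext (addeq (u := th m d x) (v := mu))
      rw [h2]
    have hy : (1 : ℤ) + chi (symp m a x) = if tr4 (symp m a x) = 0 then (2:ℤ) else 0 := by
      unfold chi; split_ifs <;> norm_num
    rw [hx, hy]
    by_cases h1 : th m d x = mu <;> by_cases h2 : tr4 (symp m a x) = 0 <;>
      simp [h1, h2]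
  rw [Finset.card_filter, Nat.cast_sum, Finset.mul_sum]
  simp only [Nat.cast_ite, Nat.cast_one, Nat.cast_zero]
  rw [Fintype.sum_congr _ _ hpt]
  have expand : ∀ x : Fin (2*m) → F,
      (∑ c : F, chi (c * (th m d x + mu))) * (1 + chi (symp m a x))
        = (∑ c : F, chi (c * (th m d x + mu)))
          + (∑ c : F, chi (c * (th m d x + mu)) * chi (symp m a x)) := by
    intro x
    rw [mul_add, mul_one, Finset.sum_mul]
  rw [Fintype.sum_congr _ _ expand, Finset.sum_add_distrib, sumA hz m d hmu]
  have hB : ∑ x : Fin (2*m) → F, ∑ c : F, chi (c * (th m d x + mu)) * chi (symp m a x)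
      = -(4^m * chi (th0 m d)) := by
    rw [Finset.sum_comm]
    rw [Finset.sum_eq_sum_sdiff_singleton_add (Finset.mem_univ (0:F))]
    have h0 : ∑ x : Fin (2*m) → F, chi ((0:F) * (th m d x + mu)) * chi (symp m a x) = 0 := by
      have hc0 : ∀ x : Fin (2*m) → F,
          chi ((0:F) * (th m d x + mu)) * chi (symp m a x) = chi (symp m a x) := by
        intro x; rw [zero_mul, chi_zero, one_mul]
      rw [Fintype.sum_congr _ _ hc0, sum_symp hz m ha0]
    rw [h0, add_zero]
    have hc : ∀ c ∈ (univ : Finset (GaloisField 2 2)) \ {0},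
        ∑ x : Fin (2*m) → F, chi (c * (th m d x + mu)) * chi (symp m a x)
          = (4^m * chi (th0 m d)) * chi c := by
      intro c hcmem
      have hc0 : c ≠ 0 := by simpa using (Finset.mem_sdiff.1 hcmem).2
      set s := symp m d a with hs
      set t := th0 m d with ht
      have hw : ∀ x : Fin (2*m) → F, chi (c * (th m d x + mu)) * chi (symp m a x)
          = chi (c * mu) * chi (c * th0 m x + symp m (fun j => c^2 * d j + a j) x) := by
        intro x
        rw [← chi_add, ← chi_add]
        apply chi_eq_of_tr
        have e1 : c * (th m d x + mu) + symp m a x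
            = (c*mu + c*th0 m x + symp m a x) + c * (symp m d x)^2 := by unfold th; ring
        have e2 : c * mu + (c * th0 m x + symp m (fun j => c^2 * d j + a j) x)
            = (c*mu + c*th0 m x + symp m a x) + c^2 * (symp m d x) := by
          rw [symp_add_left m (fun j => c^2 * d j) a, symp_smul_left]; ring
        rw [e1, e2]
        conv_lhs => rw [tr4_add]
        conv_rhs => rw [tr4_add]
        rw [tr4_shift]
      rw [Fintype.sum_congr _ _ hw, ← Finset.mul_sum, main_sum hz m hc0]
      have hth0a : th0 m a = mu + s^2 := by
        have h := ha
        unfold th at h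
        linear_combination h - (symp m d a)^2 * twoz
      have hw0 : th0 m (fun j => c^2 * d j + a j) = c^4 * t + (mu + s^2) + c^2 * s := by
        rw [th0_add m (fun j => c^2 * d j) a, th0_smul, symp_smul_left, hth0a, ← hs]
        ring
      have hval : c⁻¹ * th0 m (fun j => c^2 * d j + a j)
          = (t + c^2 * mu) + (c^2 * s^2 + c * s) := by
        rw [hw0, inv_eq_sq hc0]
        have h3 := cube_eq_one hc0
        linear_combination ((c^3 + 1) * t + c * s) * h3
      rw [hval, chi_add, chi_add]
      have hone : chi (c^2 * s^2 + c * s) = 1 := by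
        apply chi_tr_zero
        rw [tr4_add, show c^2 * s^2 = (c*s)^2 by ring, tr4_sq]
        exact CharTwo.add_self_eq_zero _
      rw [hone, mul_one]
      have hcm : chi (c^2 * mu) = chi (c * mu^2) := chi_eq_of_tr (tr4_shift c mu).symm
      rw [hcm]
      have hfin : chi (c * mu) * chi (c * mu^2) = chi c := by
        rw [← chi_add, show c * mu + c * mu^2 = c * (mu + mu^2) by ring,
          show mu + mu^2 = 1 from htrmu, mul_one]
      calc chi (c * mu) * (4^m * (chi t * chi (c * mu^2)))
          = (4^m * chi t) * (chi (c * mu) * chi (c * mu^2)) := by ring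
        _ = (4^m * chi t) * chi c := by rw [hfin]
    rw [Finset.sum_congr rfl hc, ← Finset.mul_sum]
    have h2 : ∑ c ∈ (univ : Finset (GaloisField 2 2)) \ {0}, chi c = -1 := by
      have h4 := sum_chi hz
      rw [Finset.sum_eq_sum_sdiff_singleton_add (Finset.mem_univ (0:F)), chi_zero] at h4
      linarith
    rw [h2]
    ring
  rw [hB]
  ring

end count2

lemma e1 {m : ℕ} (hm : 1 ≤ m) : (4:ℤ)^(2*m) = 4 * 2^(4*m-2) := by
  rw [show (4:ℤ) = 2^2 by norm_num, ← pow_mul, ← pow_add]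
  congr 1; omega

lemma e2 {m : ℕ} (hm : 1 ≤ m) : (4:ℤ)^m = 4 * 2^(2*m-2) := by
  rw [show (4:ℤ) = 2^2 by norm_num, ← pow_mul, ← pow_add]
  congr 1; omega

lemma e3 {m : ℕ} (hm : 1 ≤ m) : (4:ℤ)^(2*m) = 8 * 2^(4*m-3) := by
  rw [show (4:ℤ) = 2^2 by norm_num, show (8:ℤ) = 2^3 by norm_num, ← pow_mul, ← pow_add]
  congr 1; omega

lemma e4 {m : ℕ} (hm : 1 ≤ m) : (2:ℤ) * 4^m = 8 * 2^(2*m-2) := by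
  rw [show (4:ℤ) = 2^2 by norm_num, show (8:ℤ) = 2^3 by norm_num, ← pow_mul, ← pow_succ',
    ← pow_add]
  congr 1; omega

lemma keyA (m : ℕ) (hm : 1 ≤ m) (d : Fin (2*m) → F) {mu : F} (hmu : mu ≠ 0)
    (htrmu : tr4 mu = 1) :
    (Nat.card {x : Fin (2*m) → GaloisField 2 2 | tr4 (th m d x) = 1 ∧ th m d x = mu} : ℤ)
      = 2^(4*m-2) - chi (th0 m d) * 2^(2*m-2) := by
  have hset : {x : Fin (2*m) → GaloisField 2 2 | tr4 (th m d x) = 1 ∧ th m d x = mu}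
      = {x : Fin (2*m) → GaloisField 2 2 | th m d x = mu} := by
    ext x
    simp only [Set.mem_setOf_eq]
    exact ⟨fun h => h.2, fun h => ⟨by rw [h]; exact htrmu, h⟩⟩
  rw [hset]
  have hN : Nat.card {x : Fin (2*m) → GaloisField 2 2 | th m d x = mu}
      = ((univ : Finset (Fin (2*m) → F)).filter (fun x => th m d x = mu)).card := by
    rw [Nat.card_eq_fintype_card]
    convert Fintype.card_subtype _
    · exact Iff.rfl
    · infer_instance
  rw [hN]
  apply mul_left_cancel₀ (show (4:ℤ) ≠ 0 by norm_num)
  rw [count_mu (z := mu) htrmu m d hmu, e1 hm, e2 hm]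
  ring

lemma keyB (m : ℕ) (hm : 1 ≤ m) (d : Fin (2*m) → F) {mu : F} (hmu : mu ≠ 0)
    (htrmu : tr4 mu = 1) (a : Fin (2*m) → F) (ha : th m d a = mu) :
    (Nat.card {x : Fin (2*m) → GaloisField 2 2 //
        (tr4 (th m d x) = 1 ∧ th m d x = mu) ∧ x ≠ a ∧ tr4 (symp m a x) = 0} : ℤ)
      = 2^(4*m-3) - chi (th0 m d) * 2^(2*m-2) - 1 := by
  have hN : Nat.card {x : Fin (2*m) → GaloisField 2 2 //
        (tr4 (th m d x) = 1 ∧ th m d x = mu) ∧ x ≠ a ∧ tr4 (symp m a x) = 0}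
      = ((univ : Finset (Fin (2*m) → F)).filter
          (fun x => (tr4 (th m d x) = 1 ∧ th m d x = mu) ∧ x ≠ a ∧ tr4 (symp m a x) = 0)).card := by
    rw [Nat.card_eq_fintype_card]
    convert Fintype.card_subtype _
  have hfe : (univ : Finset (Fin (2*m) → F)).filter
        (fun x => (tr4 (th m d x) = 1 ∧ th m d x = mu) ∧ x ≠ a ∧ tr4 (symp m a x) = 0)
      = ((univ : Finset (Fin (2*m) → F)).filter
          (fun x => th m d x = mu ∧ tr4 (symp m a x) = 0)).erase a := by
    ext x
    simp only [Finset.mem_erase, Finset.mem_filter, Finset.mem_univ, true_and]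
    constructor
    · rintro ⟨⟨h1, h2⟩, h3, h4⟩
      exact ⟨h3, h2, h4⟩
    · rintro ⟨h3, h2, h4⟩
      exact ⟨⟨by rw [h2]; exact htrmu, h2⟩, h3, h4⟩
  have hmem : a ∈ (univ : Finset (Fin (2*m) → F)).filter
      (fun x => th m d x = mu ∧ tr4 (symp m a x) = 0) :=
    Finset.mem_filter.2 ⟨Finset.mem_univ _, ha, by rw [symp_self, tr4_zero]⟩
  have hpos : 1 ≤ ((univ : Finset (Fin (2*m) → F)).filter
      (fun x => th m d x = mu ∧ tr4 (symp m a x) = 0)).card :=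
    Finset.card_pos.2 ⟨a, hmem⟩
  rw [hN, hfe, Finset.card_erase_of_mem hmem, Nat.cast_sub hpos, Nat.cast_one]
  have hQ : (((univ : Finset (Fin (2*m) → F)).filter
      (fun x => th m d x = mu ∧ tr4 (symp m a x) = 0)).card : ℤ)
      = 2^(4*m-3) - chi (th0 m d) * 2^(2*m-2) := by
    apply mul_left_cancel₀ (show (8:ℤ) ≠ 0 by norm_num)
    rw [count_deg (z := mu) htrmu m d hmu htrmu ha, e3 hm]
    have := e4 hm
    linear_combination (-(chi (th0 m d))) * this
  rw [hQ]

end S15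

open scoped Classical in
/-- The switching sets between `NO^±(4m,2)` and `NO^∓(2m+1,4)`:
`A = {ϑ_d = λ}` and `B = {ϑ_d = λ+1}` partition the common vertex set
`V' = {x : Tr(ϑ_d(x)) = 1}`, have size `2^{4m-2} - ε 2^{2m-2}`, and in the graph
`NO^±(4m,2)` (distinct `a, b` adjacent iff `Tr⟨a,b⟩ = 0`) each is regular of degree
`2^{4m-3} - ε 2^{2m-2} - 1`. -/
theorem stmt_15 (m : ℕ) (hm : 1 ≤ m) (d : Fin (2*m) → GaloisField 2 2)
    (lam : GaloisField 2 2) (hlam : lam^2 + lam + 1 = 0) :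
    let ε : ℤ := if tr4 (th0 m d) = 0 then 1 else -1
    let V' : Set (Fin (2*m) → GaloisField 2 2) := {x | tr4 (th m d x) = 1}
    let A : Set (Fin (2*m) → GaloisField 2 2) := {x | tr4 (th m d x) = 1 ∧ th m d x = lam}
    let B : Set (Fin (2*m) → GaloisField 2 2) := {x | tr4 (th m d x) = 1 ∧ th m d x = lam + 1}
    -- `A` and `B` partition `V'`
    (A ∪ B = V' ∧ A ∩ B = ∅)
    -- sizes
    ∧ (Nat.card A : ℤ) = 2^(4*m - 2) - ε * 2^(2*m - 2)
    ∧ (Nat.card B : ℤ) = 2^(4*m - 2) - ε * 2^(2*m - 2)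
    -- each switching set is regular of degree `2^{4m-3} - ε 2^{2m-2} - 1` in `NO^±(4m,2)`
    ∧ (∀ a ∈ A, (Nat.card {x : Fin (2*m) → GaloisField 2 2 //
          x ∈ A ∧ x ≠ a ∧ tr4 (symp m a x) = 0} : ℤ) = 2^(4*m - 3) - ε * 2^(2*m - 2) - 1)
    ∧ (∀ b ∈ B, (Nat.card {x : Fin (2*m) → GaloisField 2 2 //
          x ∈ B ∧ x ≠ b ∧ tr4 (symp m b x) = 0} : ℤ) = 2^(4*m - 3) - ε * 2^(2*m - 2) - 1) := by
  intro ε V' A B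
  have twoz := S15.twoz
  have trlam : tr4 lam = 1 := by
    unfold tr4
    linear_combination hlam - twoz
  have lamne : lam ≠ 0 := by
    intro h
    rw [h] at hlam
    norm_num at hlam
  have lam1ne : lam + 1 ≠ 0 := by
    intro h
    have h1 : (1 : GaloisField 2 2) = 0 := by linear_combination hlam - lam * h
    exact one_ne_zero h1
  have trlam1 : tr4 (lam + 1) = 1 := by
    rw [S15.tr4_add, trlam, S15.tr4_one, add_zero]
  have roots : ∀ y : GaloisField 2 2, tr4 y = 1 → y = lam ∨ y = lam + 1 := by
    intro y hy
    unfold tr4 at hy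
    have hfac : (y + lam) * (y + lam + 1) = 0 := by
      linear_combination hy + hlam + y * lam * twoz
    rcases mul_eq_zero.1 hfac with h | h
    · exact Or.inl ((S15.addeq (u := y) (v := lam)).1 h)
    · right
      have h2 : y + (lam + 1) = 0 := by linear_combination h
      exact (S15.addeq (u := y) (v := lam + 1)).1 h2
  have heps : ε = S15.chi (th0 m d) := by
    show (if tr4 (th0 m d) = 0 then (1:ℤ) else -1) = S15.chi (th0 m d)
    by_cases h : tr4 (th0 m d) = 0 <;> simp [S15.chi, h]
  refine ⟨⟨?_, ?_⟩, ?_, ?_, ?_, ?_⟩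
  · ext x
    simp only [Set.mem_union, Set.mem_setOf_eq]
    constructor
    · rintro (⟨h, _⟩ | ⟨h, _⟩) <;> exact h
    · intro h
      rcases roots _ h with h2 | h2
      · exact Or.inl ⟨h, h2⟩
      · exact Or.inr ⟨h, h2⟩
  · ext x
    simp only [Set.mem_inter_iff, Set.mem_setOf_eq, Set.mem_empty_iff_false, iff_false]
    rintro ⟨⟨-, h1⟩, -, h2⟩
    rw [h1] at h2
    have h3 : (1 : GaloisField 2 2) = 0 := by linear_combination -h2
    exact one_ne_zero h3
  · rw [heps]
    have := S15.keyA m hm d lamne trlam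
    linear_combination this
  · rw [heps]
    have := S15.keyA m hm d lam1ne trlam1
    linear_combination this
  · intro a ha
    rw [heps]
    exact S15.keyB m hm d lamne trlam a ha.2
  · intro b hb
    rw [heps]
    exact S15.keyB m hm d lam1ne trlam1 b hb.2
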